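/- Let 𝔪(k,ℓ,q) = ℓ₁ · gcd(k, ℓ₁^u) for u sufficiently large, where ℓ₁ = ℓ / gcd(ℓ,q). If ℓ does not divide 𝔫(n,m,k) := (m+k) · n / gcd(n,k), then for every divisor e of k, lcm(e, 𝔪(k,ℓ,m+k)) does not divide n. -/

import Mathlib

/-- Let `ℓ₁ = ℓ / gcd(ℓ, m+k)` and `𝔪(k,ℓ,m+k) = ℓ₁ · gcd(k, ℓ₁^u)` for `u` sufficiently
large (i.e. such that `gcd(k, ℓ₁^v)` has stabilized). If `ℓ` does not divide
`𝔫(n,m,k) = (m+k)·n/gcd(n,k)`, then for every divisor `e` of `k`,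
`lcm(e, 𝔪(k,ℓ,m+k))` does not divide `n`. -/
theorem not_lcm_frakm_dvd (k ℓ m n u : ℕ)
    (hk : 0 < k) (hl : 0 < ℓ) (hm : 0 < m) (hn : 0 < n)
    (hu : ∀ v, u ≤ v →
      Nat.gcd k ((ℓ / Nat.gcd ℓ (m + k)) ^ v) = Nat.gcd k ((ℓ / Nat.gcd ℓ (m + k)) ^ u))
    (hnd : ¬ ℓ ∣ (m + k) * (n / Nat.gcd n k)) :
    ∀ e : ℕ, e ∣ k →
      ¬ Nat.lcm e ((ℓ / Nat.gcd ℓ (m + k)) * Nat.gcd k ((ℓ / Nat.gcd ℓ (m + k)) ^ u)) ∣ n := by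
  intro e he hdvd
  set ℓ₁ := ℓ / Nat.gcd ℓ (m + k) with hℓ₁
  set g := Nat.gcd k (ℓ₁ ^ u) with hg
  apply hnd
  -- ℓ₁ * g divides n
  have h1 : ℓ₁ * g ∣ n := (Nat.dvd_lcm_right e _).trans hdvd
  obtain ⟨t, ht⟩ := h1
  -- gcd(k, ℓ₁ * g) ∣ g
  have h2 : Nat.gcd k (ℓ₁ * g) ∣ g := by
    have : ℓ₁ * g ∣ ℓ₁ ^ (u + 1) := by
      rw [pow_succ, mul_comm]
      exact mul_dvd_mul (Nat.gcd_dvd_right _ _) dvd_rfl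
    calc Nat.gcd k (ℓ₁ * g) ∣ Nat.gcd k (ℓ₁ ^ (u + 1)) :=
          Nat.dvd_gcd (Nat.gcd_dvd_left _ _) ((Nat.gcd_dvd_right _ _).trans this)
      _ = g := hu (u + 1) (Nat.le_succ u)
  -- gcd(n, k) ∣ g * t
  have h3 : Nat.gcd n k ∣ g * t := by
    rw [Nat.gcd_comm, ht]
    calc Nat.gcd k (ℓ₁ * g * t) ∣ Nat.gcd k (ℓ₁ * g) * Nat.gcd k t :=
          Nat.gcd_mul_right_dvd_mul_gcd k (ℓ₁ * g) t
      _ ∣ g * t := mul_dvd_mul h2 (Nat.gcd_dvd_right k t)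
  -- ℓ₁ * gcd(n,k) ∣ n
  have h4 : ℓ₁ * Nat.gcd n k ∣ n := by
    calc ℓ₁ * Nat.gcd n k ∣ ℓ₁ * (g * t) := mul_dvd_mul_left ℓ₁ h3
      _ = n := by rw [ht, mul_assoc]
  have hgpos : 0 < Nat.gcd n k := Nat.gcd_pos_of_pos_left _ hn
  have h5 : ℓ₁ ∣ n / Nat.gcd n k := by
    rw [Nat.dvd_div_iff_mul_dvd (Nat.gcd_dvd_left n k)]
    rwa [mul_comm] at h4
  have h6 : ℓ = Nat.gcd ℓ (m + k) * ℓ₁ := (Nat.mul_div_cancel' (Nat.gcd_dvd_left ℓ (m + k))).symm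
  rw [h6]
  exact mul_dvd_mul (Nat.gcd_dvd_right ℓ (m + k)) h5
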